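/- Let J: Θ → ℝ^{d×d} be the Jacobian of a continuously differentiable map M: Θ → ℝ^d with M(θ*) = 0, and suppose each entry of J is Lipschitz at θ* with constant c′ and the smallest singular value of J(θ*) is at least c₃ > 0. Then for every θ in the open ball of radius c₃/(2√d c′) around θ*, we have 2‖M(θ)‖ ≥ ‖J(θ*)(θ − θ*)‖. -/

import Mathlib

open Metric

/-- Let `M : ℝ^d → ℝ^d` be C¹ with `M(θ*) = 0`, suppose each component's
gradient (row of the Jacobian) is Lipschitz at `θ*` with constant `c′`, and the smallest
singular value of `J(θ*) = fderiv M θ*` is at least `c₃ > 0` (i.e. `‖J(θ*)v‖ ≥ c₃‖v‖`).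
Then for every `θ` in the open ball of radius `c₃/(2√d c′)` around `θ*`,
`2‖M(θ)‖ ≥ ‖J(θ*)(θ − θ*)‖`. -/
theorem stmt_4 {d : ℕ} (c' c₃ : ℝ) (hc' : 0 < c') (hc₃ : 0 < c₃)
    (M : EuclideanSpace ℝ (Fin d) → EuclideanSpace ℝ (Fin d))
    (θstar : EuclideanSpace ℝ (Fin d))
    (hM : ContDiff ℝ 1 M) (hM0 : M θstar = 0)
    (hrow : ∀ (j : Fin d) (θ : EuclideanSpace ℝ (Fin d)),
      ‖fderiv ℝ (fun x => M x j) θ - fderiv ℝ (fun x => M x j) θstar‖ ≤ c' * ‖θ - θstar‖)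
    (hsv : ∀ v : EuclideanSpace ℝ (Fin d), c₃ * ‖v‖ ≤ ‖fderiv ℝ M θstar v‖) :
    ∀ θ ∈ ball θstar (c₃ / (2 * Real.sqrt d * c')),
      ‖fderiv ℝ M θstar (θ - θstar)‖ ≤ 2 * ‖M θ‖ := by
  intro θ hθ
  have hdiff : ∀ x, DifferentiableAt ℝ M x :=
    fun x => (hM.differentiable one_ne_zero).differentiableAt
  set v : EuclideanSpace ℝ (Fin d) := θ - θstar with hv
  set r : ℝ := ‖v‖ with hr
  have hr0 : 0 ≤ r := norm_nonneg _
  rw [mem_ball, dist_eq_norm] at hθ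
  have hrlt : r < c₃ / (2 * Real.sqrt d * c') := hθ
  -- denominator is positive
  have hden : 0 < 2 * Real.sqrt d * c' := by
    by_contra h
    push_neg at h
    have : c₃ / (2 * Real.sqrt d * c') ≤ 0 := div_nonpos_of_nonneg_of_nonpos hc₃.le h
    linarith
  have hsd : 0 < Real.sqrt d := by nlinarith [hc'.le]
  -- componentwise mean value bound
  have hcomp : ∀ j : Fin d,
      |M θ j - fderiv ℝ M θstar v j| ≤ c' * r * r := by
    intro j
    have hdiffj : ∀ x, DifferentiableAt ℝ (fun x => M x j) x := by
      intro x
      exact ((EuclideanSpace.proj j).differentiableAt.comp x (hdiff x) : _)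
    have hfd : ∀ x, fderiv ℝ (fun y => M y j) x
        = (EuclideanSpace.proj (𝕜 := ℝ) j).comp (fderiv ℝ M x) := by
      intro x
      exact ((EuclideanSpace.proj (𝕜 := ℝ) j).hasFDerivAt.comp x (hdiff x).hasFDerivAt).fderiv
    have key := Convex.norm_image_sub_le_of_norm_fderiv_le'
      (f := fun x => M x j) (φ := fderiv ℝ (fun x => M x j) θstar)
      (s := closedBall θstar r) (C := c' * r) (x := θstar) (y := θ)
      (fun x _ => hdiffj x)
      (fun x hx => by
        refine (hrow j x).trans ?_
        have : ‖x - θstar‖ ≤ r := by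
          rwa [mem_closedBall, dist_eq_norm] at hx
        nlinarith)
      (convex_closedBall _ _)
      (mem_closedBall_self hr0)
      (by rw [mem_closedBall, dist_eq_norm])
    have hφ : fderiv ℝ (fun x => M x j) θstar (θ - θstar) = fderiv ℝ M θstar v j := by
      rw [hfd θstar]; rfl
    have key' : ‖M θ j - M θstar j - (fderiv ℝ (fun x => M x j) θstar) (θ - θstar)‖
        ≤ c' * r * ‖θ - θstar‖ := key
    rw [hφ] at key'
    have h0 : M θstar j = 0 := by rw [hM0]; rfl
    have hrr : ‖θ - θstar‖ = r := by rw [hr, hv]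
    rw [h0, sub_zero, hrr] at key'
    simpa [Real.norm_eq_abs] using key'
  -- norm of the remainder
  have hrem : ‖M θ - fderiv ℝ M θstar v‖ ≤ Real.sqrt d * (c' * r * r) := by
    rw [EuclideanSpace.norm_eq]
    have : ∑ j : Fin d, ‖(M θ - fderiv ℝ M θstar v) j‖ ^ 2
        ≤ ∑ _j : Fin d, (c' * r * r) ^ 2 := by
      apply Finset.sum_le_sum
      intro j _
      have hj : |M θ j - fderiv ℝ M θstar v j| ≤ c' * r * r := hcomp j
      have happly : (M θ - fderiv ℝ M θstar v) j = M θ j - fderiv ℝ M θstar v j := rfl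
      rw [happly, Real.norm_eq_abs]
      nlinarith [abs_nonneg (M θ j - fderiv ℝ M θstar v j)]
    refine (Real.sqrt_le_sqrt this).trans ?_
    rw [Finset.sum_const, Finset.card_univ, Fintype.card_fin, nsmul_eq_mul]
    rw [Real.sqrt_mul (Nat.cast_nonneg d),
      Real.sqrt_sq (mul_nonneg (mul_nonneg hc'.le hr0) hr0)]
  -- combine
  have hJv : c₃ * r ≤ ‖fderiv ℝ M θstar v‖ := hsv v
  have htri : ‖fderiv ℝ M θstar v‖ ≤ ‖M θ‖ + ‖M θ - fderiv ℝ M θstar v‖ := by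
    have := norm_sub_le (M θ) (M θ - fderiv ℝ M θstar v)
    simpa using this
  have hsmall : Real.sqrt d * (c' * r * r) ≤ c₃ * r / 2 := by
    have : Real.sqrt d * c' * r ≤ c₃ / 2 := by
      rcases eq_or_lt_of_le hr0 with h0 | h0
      · rw [← h0, mul_zero]; positivity
      · have := (lt_div_iff₀ hden).mp hrlt
        nlinarith
    nlinarith
  have : ‖fderiv ℝ M θstar v‖ ≤ ‖M θ‖ + ‖fderiv ℝ M θstar v‖ / 2 := by
    have h1 : c₃ * r / 2 ≤ ‖fderiv ℝ M θstar v‖ / 2 := by linarith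
    linarith [htri, hrem.trans (hsmall.trans h1)]
  linarith
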